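/- Let G be a finite p-group with G = AH where A is an abelian normal subgroup and H a subgroup, and suppose A ∩ H ⊆ Φ(G). Then G/Φ(G) is isomorphic to A/((A∩H)A^p[A,H]) × H/((A∩H)Φ(H)). -/

import Mathlib

open scoped Pointwise
open scoped commutatorElement

open Subgroup

section Burnside

variable {p : ℕ} [Fact p.Prime] {G : Type*} [Group G] [Finite G]

private lemma coatom_facts (hG : IsPGroup p G) {M : Subgroup G} (hM : IsCoatom M) :
    M.Normal ∧ (∀ g : G, g ^ p ∈ M) ∧ ∀ g₁ g₂ : G, ⁅g₁, g₂⁆ ∈ M := by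
  haveI : Group.IsNilpotent G := hG.isNilpotent
  haveI hMn : M.Normal :=
    Subgroup.NormalizerCondition.normal_of_coatom M normalizerCondition_of_isNilpotent hM
  refine ⟨hMn, ?_, ?_⟩
  all_goals {
    have hsub : ∀ S : Subgroup (G ⧸ M), S = ⊥ ∨ S = ⊤ := by
      intro S
      have h1 : M ≤ S.comap (QuotientGroup.mk' M) := by
        intro m hm
        simp only [mem_comap, QuotientGroup.mk'_apply]
        rw [QuotientGroup.eq_one_iff m |>.mpr hm]
        exact one_mem S
      rcases h1.lt_or_eq with h | h
      · right
        have htop := hM.2 _ h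
        have hmap := congrArg (Subgroup.map (QuotientGroup.mk' M)) htop
        rwa [map_comap_eq_self_of_surjective (QuotientGroup.mk'_surjective M),
          map_top_of_surjective _ (QuotientGroup.mk'_surjective M)] at hmap
      · left
        have hS := congrArg (Subgroup.map (QuotientGroup.mk' M)) h
        rw [map_comap_eq_self_of_surjective (QuotientGroup.mk'_surjective M)] at hS
        rw [← hS, Subgroup.map_eq_bot_iff, QuotientGroup.ker_mk']
    have hexp : ∀ x : G ⧸ M, x ^ p = 1 := by
      intro x
      rcases hsub (zpowers (x ^ p)) with h | h
      · have := mem_zpowers (x ^ p)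
        rwa [h, Subgroup.mem_bot] at this
      · have hx : x ∈ zpowers (x ^ p) := h ▸ mem_top x
        obtain ⟨k, hk⟩ := hx
        obtain ⟨n, hn⟩ := (hG.to_quotient M) x
        have h2 : x ^ ((p : ℤ) * k - 1) = 1 := by
          have hxx : ((x ^ p) ^ k : G ⧸ M) = x := hk
          rw [zpow_sub, zpow_mul, zpow_natCast, hxx, zpow_one, mul_inv_cancel]
        have h3 : (orderOf x : ℤ) ∣ (p : ℤ) * k - 1 := orderOf_dvd_iff_zpow_eq_one.mpr h2
        have hd : orderOf x ∣ p ^ n := orderOf_dvd_of_pow_eq_one hn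
        rcases eq_or_ne (orderOf x) 1 with h1 | h1
        · rw [orderOf_eq_one_iff.mp h1, one_pow]
        · exfalso
          obtain ⟨m, hm, hom⟩ := (Nat.dvd_prime_pow (Fact.out : p.Prime)).mp hd
          have hm1 : m ≠ 0 := by rintro rfl; rw [pow_zero] at hom; exact h1 hom
          have hpd : (p : ℤ) ∣ (p : ℤ) * k - 1 := by
            refine dvd_trans ?_ h3
            rw [hom]
            exact_mod_cast dvd_pow_self p hm1
          have hone : (p : ℤ) ∣ 1 := by
            have := dvd_sub (dvd_mul_right (p : ℤ) k) hpd
            simpa using this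
          have : p ∣ 1 := by exact_mod_cast hone
          exact (Fact.out : p.Prime).one_lt.ne' (Nat.dvd_one.mp this)
    have hcomm : ∀ x y : G ⧸ M, Commute x y := by
      intro x y
      rcases hsub (zpowers x) with h | h
      · have := mem_zpowers x
        rw [h, Subgroup.mem_bot] at this
        rw [this]; exact Commute.one_left y
      · have hy : y ∈ zpowers x := h ▸ mem_top y
        obtain ⟨k, hk⟩ := hy
        exact hk ▸ (Commute.refl x).zpow_right k
    first
    | · intro g
        have : ((g ^ p : G) : G ⧸ M) = 1 := by
          rw [← QuotientGroup.mk'_apply, map_pow]; exact hexp _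
        exact (QuotientGroup.eq_one_iff _).mp this
    | · intro g₁ g₂
        have : ((⁅g₁, g₂⁆ : G) : G ⧸ M) = 1 := by
          rw [← QuotientGroup.mk'_apply, map_commutatorElement]
          exact commutatorElement_eq_one_iff_commute.mpr (hcomm _ _)
        exact (QuotientGroup.eq_one_iff _).mp this }

/-- Burnside basis theorem: the Frattini subgroup of a finite `p`-group is `G^p [G,G]`. -/
private theorem frattini_eq_pgroup (hG : IsPGroup p G) :
    frattini G = Subgroup.closure {x : G | ∃ g : G, x = g ^ p} ⊔ commutator G := by
  apply le_antisymm
  · set Φ' := Subgroup.closure {x : G | ∃ g : G, x = g ^ p} ⊔ commutator G with hΦ'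
    intro x hxf
    by_contra hxΦ
    have hfin : Finite (Subgroup G) := Finite.of_injective _ SetLike.coe_injective
    set S : Set (Subgroup G) := {K | Φ' ≤ K ∧ x ∉ K} with hSdef
    obtain ⟨M, hMS, hMmax⟩ :=
      Set.Finite.exists_maximalFor id S (Set.toFinite S) ⟨Φ', le_rfl, hxΦ⟩
    obtain ⟨hΦ'M, hxM⟩ := hMS
    haveI hMn : M.Normal := by
      constructor
      intro m hm g
      have hc : ⁅g, m⁆ ∈ M :=
        hΦ'M (mem_sup_right (commutator_mem_commutator (mem_top g) (mem_top m)))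
      have hid : ⁅g, m⁆ * m = g * m * g⁻¹ := by
        rw [commutatorElement_def]; group
      exact hid ▸ mul_mem hc hm
    have hkey : ∀ K : Subgroup G, M < K → x ∈ K := by
      intro K hK
      by_contra hxK
      exact hK.not_ge (hMmax ⟨hΦ'M.trans hK.le, hxK⟩ hK.le)
    have hcoatom : IsCoatom M := by
      constructor
      · intro h; exact hxM (h ▸ mem_top x)
      · intro K hMK
        have hxK := hkey K hMK
        rw [eq_top_iff']
        intro g
        by_cases hg : g ∈ M
        · exact hMK.le hg
        have hlt : M < M ⊔ zpowers g := by
          refine lt_of_le_of_ne le_sup_left fun he => hg ?_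
          rw [he]; exact mem_sup_right (mem_zpowers g)
        have hx2 : x ∈ M ⊔ zpowers g := hkey _ hlt
        have hgp : ((g : G ⧸ M)) ^ p = 1 := by
          rw [← QuotientGroup.mk'_apply, ← map_pow]
          exact (QuotientGroup.eq_one_iff _).mpr
            (hΦ'M (mem_sup_left (subset_closure ⟨g, rfl⟩)))
        obtain ⟨k, hk⟩ : ∃ k : ℤ, ((g : G ⧸ M)) ^ k = (x : G ⧸ M) := by
          rw [← SetLike.mem_coe, Subgroup.normal_mul] at hx2
          obtain ⟨m, hm, t, ht, hmt⟩ := Set.mem_mul.mp hx2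
          obtain ⟨k, hkt⟩ := ht
          refine ⟨k, ?_⟩
          rw [← hmt, ← hkt]
          rw [QuotientGroup.mk_mul, QuotientGroup.eq_one_iff m |>.mpr hm, one_mul,
            ← QuotientGroup.mk'_apply, ← QuotientGroup.mk'_apply, ← map_zpow]
        have hxne : (x : G ⧸ M) ≠ 1 := fun h => hxM ((QuotientGroup.eq_one_iff x).mp h)
        have hpk : ¬ ((p : ℤ) ∣ k) := by
          rintro ⟨m, rfl⟩
          apply hxne
          rw [← hk, zpow_mul, zpow_natCast, hgp, one_zpow]
        have hcop : IsCoprime (k : ℤ) (p : ℤ) := by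
          rw [Int.isCoprime_iff_gcd_eq_one]
          have h1 : (Int.gcd k p : ℤ) ∣ p := Int.gcd_dvd_right _ _
          have h2 : Int.gcd k p ∣ p := by exact_mod_cast h1
          rcases (Fact.out : p.Prime).eq_one_or_self_of_dvd _ h2 with h | h
          · exact h
          · exfalso
            apply hpk
            have := Int.gcd_dvd_left (a := k) (b := p)
            rw [h] at this
            exact_mod_cast this
        obtain ⟨u, v, huv⟩ := hcop
        have hgz : (g : G ⧸ M) = ((x : G ⧸ M)) ^ u := by
          calc (g : G ⧸ M) = ((g : G ⧸ M)) ^ (u * k + v * p) := by rw [huv, zpow_one]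
          _ = (((g : G ⧸ M)) ^ k) ^ u * (((g : G ⧸ M)) ^ (p : ℤ)) ^ v := by
              rw [zpow_add, mul_comm u k, mul_comm v (p : ℤ), zpow_mul, zpow_mul]
          _ = ((x : G ⧸ M)) ^ u := by rw [hk, zpow_natCast, hgp, one_zpow, mul_one]
        have hmem : (x ^ u)⁻¹ * g ∈ M := by
          apply QuotientGroup.eq.mp
          rw [← QuotientGroup.mk'_apply, map_zpow, QuotientGroup.mk'_apply, ← hgz]
        have hgd : g = x ^ u * ((x ^ u)⁻¹ * g) := by group
        rw [hgd]
        exact mul_mem (zpow_mem hxK u) (hMK.le hmem)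
    exact hxM (frattini_le_coatom hcoatom hxf)
  · have : frattini G = ⨅ M ∈ {H : Subgroup G | IsCoatom H}, M := rfl
    rw [this]
    refine le_iInf₂ fun M hM => sup_le ?_ ?_
    · rw [Subgroup.closure_le]
      rintro _ ⟨g, rfl⟩
      exact (coatom_facts hG hM).2.1 g
    · show ⁅(⊤ : Subgroup G), ⊤⁆ ≤ M
      rw [Subgroup.commutator_le]
      intro g₁ _ g₂ _
      exact (coatom_facts hG hM).2.2 g₁ g₂

end Burnside

/-- `A^p[A,H]`: the subgroup generated by `p`-th powers of elements of `A`
together with commutators `[a,h]` for `a ∈ A`, `h ∈ H`. -/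
def pPowComm (p : ℕ) {G : Type} [Group G] (A H : Subgroup G) : Subgroup G :=
  Subgroup.closure ({x | ∃ a ∈ A, x = a ^ p} ∪ {x | ∃ a ∈ A, ∃ h ∈ H, x = ⁅a, h⁆})

/-- If `G = AH` is a decomposition of a finite `p`-group with `A` abelian normal and
`A ∩ H ⊆ Φ(G)`, then `G/Φ(G) ≅ A/((A∩H)A^p[A,H]) × H/((A∩H)Φ(H))`. -/
theorem frattiniQuotient_of_decomposition (p : ℕ) [Fact p.Prime] (G : Type) [Group G]
    [Finite G] (hG : IsPGroup p G) (A H : Subgroup G) [A.Normal] [IsMulCommutative A]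
    (hprod : (A : Set G) * (H : Set G) = Set.univ)
    (hcap : A ⊓ H ≤ frattini G)
    [hN : ((A ⊓ H).subgroupOf H ⊔ frattini ↥H).Normal] :
    Nonempty ((G ⧸ frattini G) ≃*
      (↥A ⧸ ((A ⊓ H) ⊔ pPowComm p A H).subgroupOf A) ×
      (↥H ⧸ ((A ⊓ H).subgroupOf H ⊔ frattini ↥H))) := by
  classical
  have hdecomp : ∀ g : G, ∃ a ∈ A, ∃ h ∈ H, a * h = g := by
    intro g
    have : g ∈ (A : Set G) * (H : Set G) := by rw [hprod]; trivial
    exact Set.mem_mul.mp this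
  have hgenp : ∀ a ∈ A, (a : G) ^ p ∈ pPowComm p A H := fun a ha =>
    Subgroup.subset_closure (Or.inl ⟨a, ha, rfl⟩)
  have hgenc : ∀ a ∈ A, ∀ h ∈ H, ⁅a, h⁆ ∈ pPowComm p A H := fun a ha h hh =>
    Subgroup.subset_closure (Or.inr ⟨a, ha, h, hh, rfl⟩)
  have hK0A : pPowComm p A H ≤ A := by
    rw [pPowComm, Subgroup.closure_le]
    rintro x (⟨a, ha, rfl⟩ | ⟨a, ha, h, hh, rfl⟩)
    · exact pow_mem ha p
    · have hidc : ⁅a, h⁆ = a * (h * a⁻¹ * h⁻¹) := by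
        rw [commutatorElement_def]; group
      rw [SetLike.mem_coe, hidc]
      exact mul_mem ha ((inferInstance : A.Normal).conj_mem _ (inv_mem ha) h)
  haveI hK0N : (pPowComm p A H).Normal := by
    constructor
    intro x hx g
    revert g
    refine Subgroup.closure_induction ?_ ?_ ?_ ?_ hx
    · rintro x (⟨a, ha, rfl⟩ | ⟨a, ha, h, hh, rfl⟩) g
      · have hcp : g * a ^ p * g⁻¹ = (g * a * g⁻¹) ^ p := conj_pow.symm
        rw [hcp]
        exact hgenp _ ((inferInstance : A.Normal).conj_mem _ ha g)
      · obtain ⟨a₀, ha₀, h₀, hh₀, rfl⟩ := hdecomp g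
        have ha' : h₀ * a * h₀⁻¹ ∈ A := (inferInstance : A.Normal).conj_mem _ ha h₀
        have hh' : h₀ * h * h₀⁻¹ ∈ H := mul_mem (mul_mem hh₀ hh) (inv_mem hh₀)
        have step1 : (a₀ * h₀) * ⁅a, h⁆ * (a₀ * h₀)⁻¹
            = ⁅a₀ * (h₀ * a * h₀⁻¹), h₀ * h * h₀⁻¹⁆ * ⁅a₀, h₀ * h * h₀⁻¹⁆⁻¹ := by
          simp only [commutatorElement_def]; group
        rw [step1]
        exact mul_mem (hgenc _ (mul_mem ha₀ ha') _ hh') (inv_mem (hgenc _ ha₀ _ hh'))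
    · intro g; simpa using one_mem (pPowComm p A H)
    · intro x y hx hy ihx ihy g
      have hxy : g * (x * y) * g⁻¹ = (g * x * g⁻¹) * (g * y * g⁻¹) := by group
      rw [hxy]; exact mul_mem (ihx g) (ihy g)
    · intro x hx ihx g
      have hxi : g * x⁻¹ * g⁻¹ = (g * x * g⁻¹)⁻¹ := by group
      rw [hxi]; exact inv_mem (ihx g)
  have hcentral : ∀ a ∈ A, ∀ g : G, ⁅(a : G), g⁆ ∈ pPowComm p A H := by
    intro a ha g
    obtain ⟨a₀, ha₀, h₀, hh₀, rfl⟩ := hdecomp g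
    have hcom : a * a₀ = a₀ * a := Subgroup.mul_comm_of_mem_isMulCommutative A ha ha₀
    have hid : ⁅a, a₀ * h₀⁆ = a₀ * ⁅a, h₀⁆ * a₀⁻¹ := by
      simp only [commutatorElement_def, mul_inv_rev]
      calc a * (a₀ * h₀) * a⁻¹ * (h₀⁻¹ * a₀⁻¹)
          = a * a₀ * (h₀ * a⁻¹ * h₀⁻¹ * a₀⁻¹) := by group
        _ = a₀ * a * (h₀ * a⁻¹ * h₀⁻¹ * a₀⁻¹) := by rw [hcom]
        _ = a₀ * (a * h₀ * a⁻¹ * h₀⁻¹) * a₀⁻¹ := by group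
    rw [hid]
    exact hK0N.conj_mem _ (hgenc _ ha _ hh₀) a₀
  have hfratG := frattini_eq_pgroup hG
  have hfratH := frattini_eq_pgroup (hG.to_subgroup H)
  have hK0f : pPowComm p A H ≤ frattini G := by
    rw [hfratG, pPowComm, Subgroup.closure_le]
    rintro x (⟨a, ha, rfl⟩ | ⟨a, ha, h, hh, rfl⟩)
    · exact Subgroup.mem_sup_left (Subgroup.subset_closure ⟨a, rfl⟩)
    · exact Subgroup.mem_sup_right
        (Subgroup.commutator_mem_commutator (Subgroup.mem_top a) (Subgroup.mem_top h))
  have hmapf : (frattini ↥H).map H.subtype ≤ frattini G := by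
    rw [hfratH, Subgroup.map_sup, hfratG]
    apply sup_le
    · apply le_sup_of_le_left
      rw [MonoidHom.map_closure, Subgroup.closure_le]
      rintro _ ⟨_, ⟨h, rfl⟩, rfl⟩
      exact Subgroup.subset_closure ⟨(h : G), by simp⟩
    · apply le_sup_of_le_right
      show Subgroup.map H.subtype ⁅(⊤ : Subgroup ↥H), ⊤⁆ ≤ ⁅(⊤ : Subgroup G), ⊤⁆
      rw [Subgroup.map_commutator]
      exact Subgroup.commutator_mono le_top le_top
  have hgenHf : ∀ h₁ ∈ H, ∀ h₂ ∈ H, ⁅h₁, h₂⁆ ∈ (frattini ↥H).map H.subtype := by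
    intro h₁ hh₁ h₂ hh₂
    refine Subgroup.mem_map.mpr ⟨⁅(⟨h₁, hh₁⟩ : ↥H), (⟨h₂, hh₂⟩ : ↥H)⁆, ?_, ?_⟩
    · rw [hfratH]
      exact Subgroup.mem_sup_right
        (Subgroup.commutator_mem_commutator (Subgroup.mem_top _) (Subgroup.mem_top _))
    · rw [map_commutatorElement]; rfl
  have hpowK : ∀ a ∈ A, ∀ h ∈ H, (a * h) ^ p * (h ^ p)⁻¹ ∈ pPowComm p A H := by
    intro a ha h hh
    apply (QuotientGroup.eq_one_iff _).mp
    have h1 : ((⁅a, h⁆ : G) : G ⧸ pPowComm p A H) = 1 :=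
      (QuotientGroup.eq_one_iff _).mpr (hgenc a ha h hh)
    have hcom : Commute ((a : G ⧸ pPowComm p A H)) ((h : G ⧸ pPowComm p A H)) := by
      apply commutatorElement_eq_one_iff_commute.mp
      simpa [commutatorElement_def] using h1
    have ha1 : ((a : G ⧸ pPowComm p A H)) ^ p = 1 := by
      rw [← QuotientGroup.mk_pow]
      exact (QuotientGroup.eq_one_iff _).mpr (hgenp a ha)
    simp only [QuotientGroup.mk_mul, QuotientGroup.mk_inv, QuotientGroup.mk_pow]
    rw [hcom.mul_pow, ha1, one_mul, mul_inv_cancel]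
  set T := pPowComm p A H ⊔ (frattini ↥H).map H.subtype with hTdef
  haveI hTN : T.Normal := by
    constructor
    intro x hx g
    rw [hTdef, ← SetLike.mem_coe, Subgroup.normal_mul] at hx
    obtain ⟨k, hk, f₀, hf₀, rfl⟩ := Set.mem_mul.mp hx
    obtain ⟨y, hy, rfl⟩ := Subgroup.mem_map.mp hf₀
    obtain ⟨a₀, ha₀, h₀, hh₀, rfl⟩ := hdecomp g
    have hsplit : (a₀ * h₀) * (k * H.subtype y) * (a₀ * h₀)⁻¹
        = ((a₀ * h₀) * k * (a₀ * h₀)⁻¹) * ((a₀ * h₀) * H.subtype y * (a₀ * h₀)⁻¹) := by group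
    rw [hsplit]
    refine mul_mem (Subgroup.mem_sup_left (hK0N.conj_mem _ hk _)) ?_
    have hyH : (a₀ * h₀) * H.subtype y * (a₀ * h₀)⁻¹
        = a₀ * (H.subtype ((⟨h₀, hh₀⟩ : ↥H) * y * (⟨h₀, hh₀⟩ : ↥H)⁻¹)) * a₀⁻¹ := by
      show _ = a₀ * (h₀ * H.subtype y * h₀⁻¹) * a₀⁻¹
      group
    rw [hyH]
    have hzmem : H.subtype ((⟨h₀, hh₀⟩ : ↥H) * y * (⟨h₀, hh₀⟩ : ↥H)⁻¹)
        ∈ (frattini ↥H).map H.subtype :=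
      Subgroup.mem_map.mpr
        ⟨(⟨h₀, hh₀⟩ : ↥H) * y * (⟨h₀, hh₀⟩ : ↥H)⁻¹,
          (inferInstance : (frattini ↥H).Normal).conj_mem y hy _, rfl⟩
    have hz2 : a₀ * (H.subtype ((⟨h₀, hh₀⟩ : ↥H) * y * (⟨h₀, hh₀⟩ : ↥H)⁻¹)) * a₀⁻¹
        = ⁅a₀, H.subtype ((⟨h₀, hh₀⟩ : ↥H) * y * (⟨h₀, hh₀⟩ : ↥H)⁻¹)⁆
          * H.subtype ((⟨h₀, hh₀⟩ : ↥H) * y * (⟨h₀, hh₀⟩ : ↥H)⁻¹) := by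
      rw [commutatorElement_def]; group
    rw [hz2]
    exact mul_mem (Subgroup.mem_sup_left (hcentral a₀ ha₀ _)) (Subgroup.mem_sup_right hzmem)
  have hfratT : frattini G ≤ T := by
    rw [hfratG]
    apply sup_le
    · rw [Subgroup.closure_le]
      rintro _ ⟨g, rfl⟩
      obtain ⟨a, ha, h, hh, rfl⟩ := hdecomp g
      have hsplit : (a * h) ^ p = ((a * h) ^ p * (h ^ p)⁻¹) * h ^ p := by group
      rw [SetLike.mem_coe, hsplit, hTdef]
      refine mul_mem (Subgroup.mem_sup_left (hpowK a ha h hh)) (Subgroup.mem_sup_right ?_)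
      refine Subgroup.mem_map.mpr ⟨(⟨h, hh⟩ : ↥H) ^ p, ?_, by simp⟩
      rw [hfratH]
      exact Subgroup.mem_sup_left (Subgroup.subset_closure ⟨⟨h, hh⟩, rfl⟩)
    · show ⁅(⊤ : Subgroup G), ⊤⁆ ≤ _
      rw [Subgroup.commutator_le]
      intro g₁ _ g₂ _
      obtain ⟨a₁, ha₁, h₁, hh₁, rfl⟩ := hdecomp g₁
      obtain ⟨a₂, ha₂, h₂, hh₂, rfl⟩ := hdecomp g₂
      apply (QuotientGroup.eq_one_iff _).mp
      have hcA : ∀ a ∈ A, ∀ g : G, Commute ((a : G ⧸ T)) ((g : G ⧸ T)) := by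
        intro a ha g
        apply commutatorElement_eq_one_iff_commute.mp
        have h1 : ((⁅a, g⁆ : G) : G ⧸ T) = 1 := by
          rw [QuotientGroup.eq_one_iff, hTdef]
          exact Subgroup.mem_sup_left (hcentral a ha g)
        simpa [commutatorElement_def] using h1
      have hcH : Commute ((h₁ : G ⧸ T)) ((h₂ : G ⧸ T)) := by
        apply commutatorElement_eq_one_iff_commute.mp
        have h1 : ((⁅h₁, h₂⁆ : G) : G ⧸ T) = 1 := by
          rw [QuotientGroup.eq_one_iff, hTdef]
          exact Subgroup.mem_sup_right (hgenHf h₁ hh₁ h₂ hh₂)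
        simpa [commutatorElement_def] using h1
      have hC : Commute ((a₁ : G ⧸ T) * (h₁ : G ⧸ T)) ((a₂ : G ⧸ T) * (h₂ : G ⧸ T)) := by
        have c1 : Commute ((a₁ : G ⧸ T)) ((a₂ : G ⧸ T) * (h₂ : G ⧸ T)) :=
          Commute.mul_right (hcA a₁ ha₁ a₂) (hcA a₁ ha₁ h₂)
        have c2 : Commute ((h₁ : G ⧸ T)) ((a₂ : G ⧸ T) * (h₂ : G ⧸ T)) :=
          Commute.mul_right ((hcA a₂ ha₂ h₁).symm) hcH
        exact Commute.mul_left c1 c2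
      have hcc := commutatorElement_eq_one_iff_commute.mpr hC
      simpa [commutatorElement_def] using hcc
  -- the quotient modulo the Frattini subgroup is commutative
  letI : CommGroup (G ⧸ frattini G) :=
    { (inferInstance : Group (G ⧸ frattini G)) with
      mul_comm := by
        intro x y
        obtain ⟨u, rfl⟩ := QuotientGroup.mk_surjective x
        obtain ⟨v, rfl⟩ := QuotientGroup.mk_surjective y
        rw [← QuotientGroup.mk_mul, ← QuotientGroup.mk_mul]
        apply QuotientGroup.eq.mpr
        have h1 : (u * v)⁻¹ * (v * u) = ⁅v⁻¹, u⁻¹⁆ := by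
          rw [commutatorElement_def]; group
        rw [h1, hfratG]
        exact Subgroup.mem_sup_right
          (Subgroup.commutator_mem_commutator (Subgroup.mem_top _) (Subgroup.mem_top _)) }
  let f : ↥A × ↥H →* G ⧸ frattini G :=
    MonoidHom.mk' (fun x => (((x.1 : G) * (x.2 : G) : G) : G ⧸ frattini G)) (by
      rintro ⟨a₁, h₁⟩ ⟨a₂, h₂⟩
      show ((((a₁ * a₂ : ↥A) : G) * ((h₁ * h₂ : ↥H) : G) : G) : G ⧸ frattini G) = _
      have hco : ((a₁ * a₂ : ↥A) : G) * ((h₁ * h₂ : ↥H) : G)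
          = (a₁ : G) * (a₂ : G) * ((h₁ : G) * (h₂ : G)) := by push_cast; rfl
      rw [hco]
      simp only [QuotientGroup.mk_mul]
      exact mul_mul_mul_comm _ _ _ _)
  have hfsurj : Function.Surjective f := by
    intro q
    obtain ⟨g, rfl⟩ := QuotientGroup.mk_surjective q
    obtain ⟨a, ha, h, hh, rfl⟩ := hdecomp g
    exact ⟨(⟨a, ha⟩, ⟨h, hh⟩), rfl⟩
  have hker : f.ker = (((A ⊓ H) ⊔ pPowComm p A H).subgroupOf A).prod
      ((A ⊓ H).subgroupOf H ⊔ frattini ↥H) := by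
    ext x
    obtain ⟨⟨a, ha⟩, ⟨h, hh⟩⟩ := x
    simp only [MonoidHom.mem_ker, Subgroup.mem_prod]
    constructor
    · intro hm
      have hmem : (a * h : G) ∈ frattini G := (QuotientGroup.eq_one_iff _).mp hm
      have hT := hfratT hmem
      rw [hTdef, ← SetLike.mem_coe, Subgroup.normal_mul] at hT
      obtain ⟨k, hk, f₀, hf₀, heq⟩ := Set.mem_mul.mp hT
      obtain ⟨y, hy, rfl⟩ := Subgroup.mem_map.mp hf₀
      have hc2 : k⁻¹ * a = H.subtype y * h⁻¹ := by
        have h1 : k⁻¹ * (k * H.subtype y) * h⁻¹ = H.subtype y * h⁻¹ := by group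
        rw [heq] at h1
        rw [← h1]; group
      have hc2' : k⁻¹ * a = (y : G) * h⁻¹ := hc2
      have hcA2 : k⁻¹ * a ∈ A := mul_mem (inv_mem (hK0A hk)) ha
      have hcH2 : k⁻¹ * a ∈ H := by rw [hc2]; exact mul_mem y.2 (inv_mem hh)
      constructor
      · rw [Subgroup.mem_subgroupOf]
        have hasplit : a = k * (k⁻¹ * a) := by group
        show (a : G) ∈ _
        rw [hasplit]
        exact mul_mem (Subgroup.mem_sup_right hk) (Subgroup.mem_sup_left ⟨hcA2, hcH2⟩)
      · have hcoe : (⟨h, hh⟩ : ↥H) = (⟨k⁻¹ * a, hcH2⟩ : ↥H)⁻¹ * y := by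
          apply Subtype.ext
          show h = (k⁻¹ * a)⁻¹ * (y : G)
          rw [hc2']; group
        rw [hcoe]
        exact mul_mem
          (inv_mem (Subgroup.mem_sup_left (Subgroup.mem_subgroupOf.mpr ⟨hcA2, hcH2⟩)))
          (Subgroup.mem_sup_right hy)
    · rintro ⟨h1, h2⟩
      have ha1 : (a : G) ∈ frattini G := by
        rw [Subgroup.mem_subgroupOf] at h1
        exact (sup_le hcap hK0f) h1
      have hh1 : (h : G) ∈ frattini G := by
        have hmem2 : (h : G) ∈ ((A ⊓ H).subgroupOf H ⊔ frattini ↥H).map H.subtype :=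
          Subgroup.mem_map.mpr ⟨⟨h, hh⟩, h2, rfl⟩
        rw [Subgroup.map_sup] at hmem2
        have hle : ((A ⊓ H).subgroupOf H).map H.subtype ⊔ (frattini ↥H).map H.subtype
            ≤ frattini G := by
          apply sup_le
          · rw [Subgroup.subgroupOf_map_subtype]
            exact inf_le_left.trans hcap
          · exact hmapf
        exact hle hmem2
      show (((a : G) * (h : G) : G) : G ⧸ frattini G) = 1
      exact (QuotientGroup.eq_one_iff _).mpr (mul_mem ha1 hh1)
  let q : ↥A × ↥H →*
      (↥A ⧸ ((A ⊓ H) ⊔ pPowComm p A H).subgroupOf A) ×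
      (↥H ⧸ ((A ⊓ H).subgroupOf H ⊔ frattini ↥H)) :=
    (QuotientGroup.mk' (((A ⊓ H) ⊔ pPowComm p A H).subgroupOf A)).prodMap
      (QuotientGroup.mk' ((A ⊓ H).subgroupOf H ⊔ frattini ↥H))
  have hqsurj : Function.Surjective q := by
    rintro ⟨x, y⟩
    obtain ⟨a, rfl⟩ := QuotientGroup.mk'_surjective _ x
    obtain ⟨h, rfl⟩ := QuotientGroup.mk'_surjective _ y
    exact ⟨(a, h), rfl⟩
  have hqker : q.ker = (((A ⊓ H) ⊔ pPowComm p A H).subgroupOf A).prod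
      ((A ⊓ H).subgroupOf H ⊔ frattini ↥H) := by
    ext ⟨x1, x2⟩
    simp only [MonoidHom.mem_ker, Subgroup.mem_prod, q, MonoidHom.coe_prodMap, Prod.map_apply',
      Prod.mk_eq_one, QuotientGroup.mk'_apply, QuotientGroup.eq_one_iff]
  exact ⟨((QuotientGroup.quotientKerEquivOfSurjective f hfsurj).symm).trans
    ((QuotientGroup.quotientMulEquivOfEq (hker.trans hqker.symm)).trans
      (QuotientGroup.quotientKerEquivOfSurjective q hqsurj))⟩
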